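/- Let (u_n)_{n∈ℕ} be a sequence of nonnegative real numbers. If there exists a > 0 such that u_n ≤ e^{−n/a} for all n ∈ ℕ, then for every k ∈ ℕ, Σ_{n∈ℕ} n^k u_n ≤ (1+a) a^k k!. -/

import Mathlib

namespace BoseHubbard

noncomputable section

open scoped BigOperators ComplexConjugate
open Complex Filter

/-! ## The one-lattice-site Hilbert space ℓ²(ℂ), modeled by coefficient sequences -/

/-- A vector of `ℓ²(ℂ)`, given by its coefficients in the canonical basis `(|n⟩)ₙ`. -/
abbrev Seq : Type := ℕ → ℂ

/-- The `ℓ²` inner product `⟨φ, ψ⟩` (antilinear in the first argument). -/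
def sInner (φ ψ : Seq) : ℂ := ∑' n, conj (φ n) * ψ n

/-- The squared `ℓ²` norm `‖φ‖²`. -/
def sNormSq (φ : Seq) : ℝ := ∑' n, ‖φ n‖ ^ 2

/-- Membership in `ℓ²(ℂ)`. -/
def MemL2 (φ : Seq) : Prop := Summable fun n => ‖φ n‖ ^ 2

/-- The moment `⟨φ, 𝒩^k φ⟩` of the number operator, for a real exponent `k`. -/
def Nmom (k : ℝ) (φ : Seq) : ℝ := ∑' n : ℕ, (n : ℝ) ^ k * ‖φ n‖ ^ 2

/-- Finiteness of the moment `⟨φ, 𝒩^k φ⟩`. -/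
def MemNmom (k : ℝ) (φ : Seq) : Prop := Summable fun n : ℕ => (n : ℝ) ^ k * ‖φ n‖ ^ 2

/-- The shifted moment `⟨φ, (𝒩+l)^k φ⟩`. -/
def NmomShift (k : ℝ) (l : ℕ) (φ : Seq) : ℝ := ∑' n : ℕ, ((n : ℝ) + l) ^ k * ‖φ n‖ ^ 2

/-- Membership in the domain `D(𝒩^k)`, i.e. `φ ∈ ℓ²` and `𝒩^k φ ∈ ℓ²`. -/
def MemDomN (k : ℝ) (φ : Seq) : Prop := MemL2 φ ∧ MemNmom (2 * k) φ

/-- The annihilation operator `a`, acting on coefficients. -/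
def opA (φ : Seq) : Seq := fun n => (Real.sqrt ((n : ℝ) + 1) : ℂ) * φ (n + 1)

/-- The creation operator `a*`, acting on coefficients (note `Real.sqrt 0 = 0` at `n = 0`). -/
def opAd (φ : Seq) : Seq := fun n => ((Real.sqrt (n : ℝ)) : ℂ) * φ (n - 1)

/-- The order parameter `α_φ = ⟨φ, a φ⟩`. -/
def alphaOf (φ : Seq) : ℂ := sInner φ (opA φ)

/-- The mean-field operator
`h^φ = -J(α_φ a* + conj α_φ a - |α_φ|²) + (J-μ)𝒩 + (U/2)𝒩(𝒩-1)` applied to `ψ`. -/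
def hMF (J μ U : ℝ) (φ ψ : Seq) : Seq := fun n =>
  (-(J : ℂ)) * (alphaOf φ * opAd ψ n + conj (alphaOf φ) * opA ψ n
      - ((‖alphaOf φ‖ : ℂ)) ^ 2 * ψ n)
    + (((J : ℂ) - (μ : ℂ)) * (n : ℂ) + ((U : ℂ) / 2) * (n : ℂ) * ((n : ℂ) - 1)) * ψ n

/-- `φ : ℝ → Seq` solves the mean-field equation `i ∂ₜ φ(t) = h^{φ(t)} φ(t)`
(coefficientwise, with `φ(t) ∈ ℓ²` and finite number of particles). -/
def IsMFSolution (J μ U : ℝ) (φ : ℝ → Seq) : Prop :=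
  (∀ t, MemL2 (φ t)) ∧ (∀ t, MemNmom 1 (φ t)) ∧
    ∀ t n, HasDerivAt (fun s => φ s n) (-Complex.I * hMF J μ U (φ t) (φ t) n) t

/-! ## The truncated mean-field dynamics -/

/-- The eigenvalue of the linear operator `A = (J-μ)𝒩 + (U/2)𝒩(𝒩-1)` on `|n⟩`. -/
def Acoef (J μ U : ℝ) (n : ℕ) : ℂ :=
  ((J : ℂ) - (μ : ℂ)) * (n : ℂ) + ((U : ℂ) / 2) * (n : ℂ) * ((n : ℂ) - 1)

/-- The linear operator `A = (J-μ)𝒩 + (U/2)𝒩(𝒩-1)`. -/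
def opALin (J μ U : ℝ) (ψ : Seq) : Seq := fun n => Acoef J μ U n * ψ n

/-- The unitary group `e^{-itA}` generated by `A`. -/
def expA (J μ U : ℝ) (t : ℝ) (φ : Seq) : Seq :=
  fun n => Complex.exp (-Complex.I * (t : ℂ) * Acoef J μ U n) * φ n

/-- The truncated annihilation operator `a_M = a 1_{𝒩 ≤ M}`. -/
def opAM (M : ℝ) (φ : Seq) : Seq :=
  fun n => if (n : ℝ) + 1 ≤ M then (Real.sqrt ((n : ℝ) + 1) : ℂ) * φ (n + 1) else 0

/-- The truncated creation operator `a*_M = 1_{𝒩 ≤ M} a*`. -/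
def opAdM (M : ℝ) (φ : Seq) : Seq := fun n => if (n : ℝ) ≤ M then opAd φ n else 0

/-- The truncated order parameter `α_M = ⟨φ, a_M φ⟩`. -/
def alphaM (M : ℝ) (φ : Seq) : ℂ := sInner φ (opAM M φ)

/-- The truncated nonlinearity `F_M(φ) = -J(α_M a*_M + conj α_M a_M - |α_M|²) φ`. -/
def FM (J M : ℝ) (φ : Seq) : Seq := fun n =>
  (-(J : ℂ)) * (alphaM M φ * opAdM M φ n + conj (alphaM M φ) * opAM M φ n
    - ((‖alphaM M φ‖ : ℂ)) ^ 2 * φ n)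

/-- The truncated mean-field operator `h_M^{α_M(φ)} = A - J(α_M a*_M + conj α_M a_M - |α_M|²)`
applied to `ψ`. -/
def hTrunc (J μ U M : ℝ) (φ ψ : Seq) : Seq := fun n =>
  opALin J μ U ψ n + (-(J : ℂ)) * (alphaM M φ * opAdM M ψ n + conj (alphaM M φ) * opAM M ψ n
    - ((‖alphaM M φ‖ : ℂ)) ^ 2 * ψ n)

/-- Differentiability in the `ℓ²` sense at time `t`, with derivative `v`. -/
def HasL2DerivAt (φ : ℝ → Seq) (v : Seq) (t : ℝ) : Prop :=
  Tendsto (fun h : ℝ => sNormSq (fun n => (φ (t + h) n - φ t n) / (h : ℂ) - v n))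
    (nhdsWithin 0 {(0 : ℝ)}ᶜ) (nhds 0)

/-- `φ : ℝ → Seq` is a (global, strong) solution of the truncated mean-field equation
`i ∂ₜ φ_M = A φ_M + F_M(φ_M)`, taking values in `D(𝒩²)`. -/
def IsTruncSolution (J μ U M : ℝ) (φ : ℝ → Seq) : Prop :=
  (∀ t, MemDomN 2 (φ t)) ∧
    ∀ t, HasL2DerivAt φ (fun n => -Complex.I * hTrunc J μ U M (φ t) (φ t) n) t

/-- Continuity of `t ↦ φ(t)` in the norm of `D(𝒩²)`. -/
def ContinuousInDom2 (φ : ℝ → Seq) : Prop :=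
  ∀ t, Tendsto (fun s =>
      sNormSq (fun n => φ s n - φ t n) + sNormSq (fun n => ((n : ℂ)) ^ 2 * (φ s n - φ t n)))
    (nhds t) (nhds 0)

/-- Continuity of `t ↦ v(t)` in the `ℓ²` norm. -/
def ContinuousInL2 (v : ℝ → Seq) : Prop :=
  ∀ t, Tendsto (fun s => sNormSq (fun n => v s n - v t n)) (nhds t) (nhds 0)

/-- The (untruncated) nonlinearity `F(φ) = -J(α_φ a* + conj α_φ a - |α_φ|²) φ`. -/
def Ffull (J : ℝ) (φ : Seq) : Seq := fun n =>
  (-(J : ℂ)) * (alphaOf φ * opAd φ n + conj (alphaOf φ) * opA φ n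
    - ((‖alphaOf φ‖ : ℂ)) ^ 2 * φ n)

/-! ## Operators on ℓ²(ℂ), given by their kernels (matrices) in the canonical basis -/

/-- The identity kernel. -/
def idKer : ℕ → ℕ → ℂ := fun m n => if m = n then 1 else 0

/-- The kernel of the rank-one projection `p_φ = |φ⟩⟨φ|`. -/
def projKer (φ : Seq) : ℕ → ℕ → ℂ := fun m n => φ m * conj (φ n)

/-- The kernel of `q_φ = 1 - p_φ`. -/
def qKer (φ : Seq) : ℕ → ℕ → ℂ := fun m n => idKer m n - projKer φ m n

/-- The product of two kernels. -/
def kerMul (A B : ℕ → ℕ → ℂ) : ℕ → ℕ → ℂ := fun m n => ∑' k, A m k * B k n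

/-- The trace of a kernel. -/
def kerTr (A : ℕ → ℕ → ℂ) : ℂ := ∑' m, A m m

/-- A kernel is positive semidefinite: hermitian with nonnegative quadratic form. -/
def kerPosSemidef (γ : ℕ → ℕ → ℂ) : Prop :=
  (∀ m n, γ n m = conj (γ m n)) ∧
    ∀ v : ℕ →₀ ℂ, 0 ≤ (∑ m ∈ v.support, ∑ n ∈ v.support, conj (v m) * γ m n * v n).re

/-- `c` is a bound for the operator norm of the kernel `B`. -/
def kerOpNormBound (B : ℕ → ℕ → ℂ) (c : ℝ) : Prop :=
  ∀ v w : ℕ →₀ ℂ,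
    ‖∑ m ∈ v.support, ∑ n ∈ w.support, conj (v m) * B m n * w n‖ ≤
      c * Real.sqrt (∑ m ∈ v.support, ‖v m‖ ^ 2) * Real.sqrt (∑ n ∈ w.support, ‖w n‖ ^ 2)

/-- The operator norm of a kernel. -/
def kerOpNorm (B : ℕ → ℕ → ℂ) : ℝ := sInf {c | 0 ≤ c ∧ kerOpNormBound B c}

/-- The trace norm `‖T‖_{L¹}`, via duality with bounded operators:
`‖T‖₁ = sup { |Tr(T B)| : ‖B‖ ≤ 1 }`. -/
def traceNorm (T : ℕ → ℕ → ℂ) : ℝ :=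
  sSup {r | ∃ B z, kerOpNormBound B 1 ∧
      HasSum (fun q : ℕ × ℕ => T q.1 q.2 * B q.2 q.1) z ∧ r = ‖z‖}

/-- The kernel of `q_φ g(𝒩) q_φ` for a diagonal operator `g(𝒩)`. -/
def qDiagq (g : ℕ → ℝ) (φ : Seq) : ℕ → ℕ → ℂ := fun m n =>
  (if m = n then ((g m : ℝ) : ℂ) else 0)
    - (((g m : ℝ) : ℂ) + ((g n : ℝ) : ℂ)) * (φ m * conj (φ n))
    + (∑' j, ((g j : ℝ) : ℂ) * ((‖φ j‖ : ℂ)) ^ 2) * (φ m * conj (φ n))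

/-! ## The lattice `Λ = (ℤ/LZ)^d` and the Fock space `ℱ = ℓ²(ℂ)^{⊗|Λ|}` -/

/-- A lattice site of `Λ = (ℤ/Lℤ)^d`. -/
abbrev Site (d L : ℕ) : Type := Fin d → ZMod L

/-- An occupation-number configuration, labeling the canonical basis of `ℱ`. -/
abbrev Cfg (d L : ℕ) : Type := Site d L → ℕ

/-- A vector of the Fock space `ℱ`, given by its coefficients. -/
abbrev FSeq (d L : ℕ) : Type := Cfg d L → ℂ

/-- The kernel of an operator on the Fock space `ℱ`. -/
abbrev FKer (d L : ℕ) : Type := Cfg d L → Cfg d L → ℂ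

/-- Nearest neighbours in `Λ`. -/
def nbr {d L : ℕ} (x y : Site d L) : Prop :=
  ∃ i : Fin d, y = Function.update x i (x i + 1) ∨ y = Function.update x i (x i - 1)

/-- The annihilation operator `a_x` at site `x`. -/
def fA {d L : ℕ} (x : Site d L) (ψ : FSeq d L) : FSeq d L :=
  fun n => (Real.sqrt ((n x : ℝ) + 1) : ℂ) * ψ (Function.update n x (n x + 1))

/-- The creation operator `a*_x` at site `x`. -/
def fAd {d L : ℕ} (x : Site d L) (ψ : FSeq d L) : FSeq d L :=
  fun n => ((Real.sqrt (n x : ℝ)) : ℂ) * ψ (Function.update n x (n x - 1))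

open scoped Classical in
/-- The Bose–Hubbard Hamiltonian
`H_d = -(J/2d) Σ_{⟨x,y⟩}(a*_x a_y + a*_y a_x) + Σ_x ((J-μ)𝒩_x + (U/2)𝒩_x(𝒩_x-1))`,
where the sum over unordered nearest-neighbour pairs of `a*_x a_y + a*_y a_x` is written as
the sum over ordered nearest-neighbour pairs of `a*_x a_y`. -/
def HBH (d L : ℕ) [NeZero L] (J μ U : ℝ) (ψ : FSeq d L) : FSeq d L := fun n =>
  (-(J : ℂ) / (2 * (d : ℂ))) *
      ∑ x : Site d L, ∑ y : Site d L, (if nbr x y then fAd x (fA y ψ) n else 0)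
    + (∑ x : Site d L, Acoef J μ U (n x)) * ψ n

/-- `Ψ : ℝ → FSeq d L` is a normalized solution of the Schrödinger equation
`i ∂ₜ Ψ = H_d Ψ` (coefficientwise). -/
def IsSchrodingerSolution (d L : ℕ) [NeZero L] (J μ U : ℝ) (Ψ : ℝ → FSeq d L) : Prop :=
  (∀ t, HasSum (fun n => ‖Ψ t n‖ ^ 2) 1) ∧
    ∀ t n, HasDerivAt (fun s => Ψ s n) (-Complex.I * HBH d L J μ U (Ψ t) n) t

/-- `γ : ℝ → FKer d L` solves the von Neumann equation `i ∂ₜ γ = [H_d, γ]`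
(coefficientwise; we use that the matrix of `H_d` in the canonical basis is real symmetric). -/
def IsVNSolution (d L : ℕ) [NeZero L] (J μ U : ℝ) (γ : ℝ → FKer d L) : Prop :=
  ∀ t m n, HasDerivAt (fun s => γ s m n)
    (-Complex.I * (HBH d L J μ U (fun k => γ t k n) m - HBH d L J μ U (fun k => γ t m k) n)) t

/-- A Fock-space kernel is positive semidefinite. -/
def FKerPosSemidef {d L : ℕ} (γ : FKer d L) : Prop :=
  (∀ m n, γ n m = conj (γ m n)) ∧
    ∀ v : Cfg d L →₀ ℂ, 0 ≤ (∑ m ∈ v.support, ∑ n ∈ v.support, conj (v m) * γ m n * v n).re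

/-- (Diagonal) trace-class condition for a positive Fock-space kernel. -/
def FKerTraceClass {d L : ℕ} (γ : FKer d L) : Prop := Summable fun n => (γ n n).re

/-- The kernel has trace one. -/
def FKerTraceOne {d L : ℕ} (γ : FKer d L) : Prop := HasSum (fun n => γ n n) 1

/-- The one-lattice-site reduced density matrix
`γ^{(1)} = (1/|Λ|) Σ_{x∈Λ} Tr_{Λ∖{x}} γ`, as a kernel on `ℕ`. -/
def reduced1 (d L : ℕ) [NeZero L] (γ : FKer d L) : ℕ → ℕ → ℂ := fun j k =>
  (1 / ((L : ℂ) ^ d)) * ∑ x : Site d L,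
    ∑' c : Cfg d L, if c x = 0 then γ (Function.update c x j) (Function.update c x k) else 0

/-- The trace `Tr(γ H_d)` (using that the matrix of `H_d` is real symmetric). -/
def trGammaH (d L : ℕ) [NeZero L] (J μ U : ℝ) (γ : FKer d L) : ℂ :=
  ∑' n : Cfg d L, HBH d L J μ U (fun k => γ n k) n

/-! ## Wave-function expressions on Fock space -/

/-- The inner product on Fock space. -/
def fInner {d L : ℕ} (Φ Ψ : FSeq d L) : ℂ := ∑' n, conj (Φ n) * Ψ n

/-- The projection `p_x = |φ⟩⟨φ|` acting at site `x`. -/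
def fP {d L : ℕ} (φ : Seq) (x : Site d L) (ψ : FSeq d L) : FSeq d L :=
  fun n => φ (n x) * ∑' k, conj (φ k) * ψ (Function.update n x k)

/-- The complementary projection `q_x = 1 - p_x` acting at site `x`. -/
def fQ {d L : ℕ} (φ : Seq) (x : Site d L) (ψ : FSeq d L) : FSeq d L :=
  fun n => ψ n - fP φ x ψ n

/-- The mean-field operator `h^φ_x` acting at site `x`. -/
def fHmf {d L : ℕ} (J μ U : ℝ) (φ : Seq) (x : Site d L) (ψ : FSeq d L) : FSeq d L :=
  fun n => (-(J : ℂ)) * (alphaOf φ * fAd x ψ n + conj (alphaOf φ) * fA x ψ n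
      - ((‖alphaOf φ‖ : ℂ)) ^ 2 * ψ n)
    + Acoef J μ U (n x) * ψ n

/-- `K^{(2)}_{x,y} = a*_x a_y + a*_y a_x`. -/
def fK2 {d L : ℕ} (x y : Site d L) (ψ : FSeq d L) : FSeq d L :=
  fun n => fAd x (fA y ψ) n + fAd y (fA x ψ) n

/-- `K^{(3)}_{x,y} = K^{(2)}_{x,y} - α_φ a*_x - conj α_φ a_x`. -/
def fK3 {d L : ℕ} (φ : Seq) (x y : Site d L) (ψ : FSeq d L) : FSeq d L :=
  fun n => fK2 x y ψ n - alphaOf φ * fAd x ψ n - conj (alphaOf φ) * fA x ψ n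

/-- `K^{(4)}_{x,y} = K^{(3)}_{x,y} - α_φ a*_y - conj α_φ a_y + 2|α_φ|²`. -/
def fK4 {d L : ℕ} (φ : Seq) (x y : Site d L) (ψ : FSeq d L) : FSeq d L :=
  fun n => fK3 φ x y ψ n - alphaOf φ * fAd y ψ n - conj (alphaOf φ) * fA y ψ n
    + 2 * ((‖alphaOf φ‖ : ℂ)) ^ 2 * ψ n

open scoped Classical in
/-- The expectation `⟨Ψ, H̃ Ψ⟩` of the excitation Hamiltonian `H̃`; sums over unordered
nearest-neighbour pairs are written as half the sums over ordered pairs, and `+h.c.`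
contributes a factor `2 Re`. -/
def tildeHExp (d L : ℕ) [NeZero L] (J : ℝ) (φ : Seq) (Ψ : FSeq d L) : ℝ :=
  (-(J / (2 * d))) * (1 / 2) *
      ∑ x : Site d L, ∑ y : Site d L, (if nbr x y then
        2 * (fInner Ψ (fP φ x (fP φ y (fK2 x y (fQ φ x (fQ φ y Ψ)))))).re
          + 2 * (fInner Ψ (fP φ x (fQ φ y (fK2 x y (fQ φ x (fP φ y Ψ)))))).re
        else 0)
    + (-(J / d)) * (1 / 2) *
      ∑ x : Site d L, ∑ y : Site d L, (if nbr x y then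
        2 * (fInner Ψ (fP φ x (fQ φ y (fK3 φ x y (fQ φ x (fQ φ y Ψ)))))).re else 0)
    + (-(J / (2 * d))) * (1 / 2) *
      ∑ x : Site d L, ∑ y : Site d L, (if nbr x y then
        (fInner Ψ (fQ φ x (fQ φ y (fK4 φ x y (fQ φ x (fQ φ y Ψ)))))).re else 0)

/-- The quantity `g(t) = (1/|Λ|) Σ_x ⟨Ψ, (q_x 𝒩_x² q_x + q_x) Ψ⟩`. -/
def gFunc (d L : ℕ) [NeZero L] (φ : Seq) (Ψ : FSeq d L) : ℝ :=
  (1 / (L : ℝ) ^ d) * ∑ x : Site d L,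
    ((fInner Ψ (fQ φ x (fun n => ((n x : ℂ)) ^ 2 * fQ φ x Ψ n))).re
      + (fInner Ψ (fQ φ x Ψ)).re)

/-- The quantity `f(t) = (1/|Λ|) ⟨Ψ, (H_d + Σ_x (q_x h^φ_x q_x - h^φ_x + c q_x)) Ψ⟩`. -/
def fFunc (d L : ℕ) [NeZero L] (J μ U c : ℝ) (φ : Seq) (Ψ : FSeq d L) : ℝ :=
  (1 / (L : ℝ) ^ d) * (fInner Ψ (fun n => HBH d L J μ U Ψ n +
    ∑ x : Site d L,
      (fQ φ x (fHmf J μ U φ x (fQ φ x Ψ)) n - fHmf J μ U φ x Ψ n + (c : ℂ) * fQ φ x Ψ n))).re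

/-- The time-dependent constant `C̃(s)` in the Gronwall estimate for `f`. -/
def Ctilde (J U C1 : ℝ) (φ0 : Seq) (s : ℝ) : ℝ :=
  (C1 / U) * (1 + 1 / U + (Nmom 1 φ0) ^ 2) *
    (1 + ∑ j ∈ Finset.range 7,
      (8 * J * Real.sqrt (Nmom 1 φ0)) ^ j * NmomShift (4 - (j : ℝ) / 2) j φ0 * s ^ j
        / (Nat.factorial j))


/-! ### Auxiliary lemmas for Statement 14 -/

private lemma exp_one_sub_le_inv {t : ℝ} (ht : 0 < t) : Real.exp (1 - t) ≤ 1 / t := by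
  rw [le_div_iff₀ ht]
  have h1 := Real.add_one_le_exp (t - 1)
  have h2 : Real.exp (1 - t) * Real.exp (t - 1) = 1 := by
    rw [← Real.exp_add]; norm_num
  nlinarith [Real.exp_pos (1 - t)]

/-- `x ↦ x^k e^{-x/a}` is increasing on `[0, ka]`. -/
private lemma moment_mono_up (k : ℕ) {a x y : ℝ} (ha : 0 < a) (hx : 0 ≤ x) (hxy : x ≤ y)
    (hy : y ≤ k * a) : x ^ k * Real.exp (-x / a) ≤ y ^ k * Real.exp (-y / a) := by
  rcases eq_or_lt_of_le hx with hx0 | hx0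
  · rcases Nat.eq_zero_or_pos k with hk | hk
    · subst hk
      have hy0 : y ≤ 0 := by simpa using hy
      have hyy : y = 0 := le_antisymm hy0 (hx.trans hxy)
      subst hyy
      have hxx : x = 0 := le_antisymm hxy hx
      simp [hxx]
    · rw [← hx0, zero_pow (by omega), zero_mul]
      exact mul_nonneg (pow_nonneg (hx.trans hxy) k) (Real.exp_pos _).le
  · have hy0 : 0 < y := lt_of_lt_of_le hx0 hxy
    have hkey : Real.exp ((y - x) / a) ≤ (y / x) ^ k := by
      have h1 : (y - x) / a ≤ (k : ℝ) * ((y - x) / y) := by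
        rw [mul_div_assoc', div_le_div_iff₀ ha hy0]
        nlinarith [mul_nonneg (sub_nonneg.2 hxy) (sub_nonneg.2 hy)]
      calc Real.exp ((y - x) / a) ≤ Real.exp ((k : ℝ) * ((y - x) / y)) := Real.exp_le_exp.2 h1
        _ = (Real.exp ((y - x) / y)) ^ k := by rw [← Real.exp_nat_mul]
        _ ≤ (y / x) ^ k := by
            apply pow_le_pow_left₀ (Real.exp_pos _).le
            have hrw : (y - x) / y = 1 - x / y := by field_simp
            rw [hrw]
            calc Real.exp (1 - x / y) ≤ 1 / (x / y) := exp_one_sub_le_inv (by positivity)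
              _ = y / x := one_div_div _ _
    have hx' : (0:ℝ) < x ^ k := by positivity
    have h3 : Real.exp ((y - x) / a) * x ^ k ≤ y ^ k := by
      rw [div_pow] at hkey
      exact (le_div_iff₀ hx').1 hkey
    have h4 : Real.exp ((x - y) / a) * Real.exp ((y - x) / a) = 1 := by
      rw [← Real.exp_add]; ring_nf; exact Real.exp_zero
    have h2 : x ^ k ≤ y ^ k * Real.exp ((x - y) / a) := by
      calc x ^ k = Real.exp ((x - y) / a) * (Real.exp ((y - x) / a) * x ^ k) := by
            rw [← mul_assoc, h4, one_mul]
        _ ≤ Real.exp ((x - y) / a) * y ^ k :=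
            mul_le_mul_of_nonneg_left h3 (Real.exp_pos _).le
        _ = y ^ k * Real.exp ((x - y) / a) := mul_comm _ _
    calc x ^ k * Real.exp (-x / a) ≤ (y ^ k * Real.exp ((x - y) / a)) * Real.exp (-x / a) :=
          mul_le_mul_of_nonneg_right h2 (Real.exp_pos _).le
      _ = y ^ k * Real.exp (-y / a) := by
          rw [mul_assoc, ← Real.exp_add]
          congr 2
          field_simp
          ring

/-- `x ↦ x^k e^{-x/a}` is decreasing on `[ka, ∞)`. -/
private lemma moment_mono_down (k : ℕ) {a x y : ℝ} (ha : 0 < a) (hx : (k : ℝ) * a ≤ x)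
    (hxy : x ≤ y) : y ^ k * Real.exp (-y / a) ≤ x ^ k * Real.exp (-x / a) := by
  rcases Nat.eq_zero_or_pos k with hk | hk
  · subst hk
    simp only [pow_zero, one_mul]
    apply Real.exp_le_exp.2
    rw [div_le_div_iff₀ ha ha]
    nlinarith
  · have hx0 : 0 < x := lt_of_lt_of_le (by positivity) hx
    have hy0 : 0 < y := lt_of_lt_of_le hx0 hxy
    have hkey : (y / x) ^ k ≤ Real.exp ((y - x) / a) := by
      have h1 : y / x ≤ Real.exp (y / x - 1) := by
        have := Real.add_one_le_exp (y / x - 1)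
        linarith
      calc (y / x) ^ k ≤ (Real.exp (y / x - 1)) ^ k := pow_le_pow_left₀ (by positivity) h1 k
        _ = Real.exp ((k : ℝ) * (y / x - 1)) := by rw [← Real.exp_nat_mul]
        _ ≤ Real.exp ((y - x) / a) := by
            apply Real.exp_le_exp.2
            have h2 : (k : ℝ) * (y / x - 1) = ((k : ℝ) * (y - x)) / x := by field_simp
            rw [h2, div_le_div_iff₀ hx0 ha]
            nlinarith [mul_nonneg (sub_nonneg.2 hxy) (sub_nonneg.2 hx)]
    have hx' : (0:ℝ) < x ^ k := by positivity
    have h3 : y ^ k ≤ x ^ k * Real.exp ((y - x) / a) := by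
      rw [div_pow] at hkey
      have := (div_le_iff₀ hx').1 hkey
      linarith [this]
    calc y ^ k * Real.exp (-y / a) ≤ (x ^ k * Real.exp ((y - x) / a)) * Real.exp (-y / a) :=
          mul_le_mul_of_nonneg_right h3 (Real.exp_pos _).le
      _ = x ^ k * Real.exp (-x / a) := by
          rw [mul_assoc, ← Real.exp_add]
          congr 2
          field_simp
          ring

/-- Global maximum bound `x^k e^{-x/a} ≤ k! a^k` for `x ≥ 0`. -/
private lemma moment_le_max (k : ℕ) {a x : ℝ} (ha : 0 < a) (hx : 0 ≤ x) :
    x ^ k * Real.exp (-x / a) ≤ (k.factorial : ℝ) * a ^ k := by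
  have hfac : (0:ℝ) < (k.factorial : ℝ) := by
    exact_mod_cast k.factorial_pos
  have h1 : (x / a) ^ k / (k.factorial : ℝ) ≤ Real.exp (x / a) := by
    refine le_trans ?_ (Real.sum_le_exp_of_nonneg (by positivity) (k + 1))
    exact Finset.single_le_sum (f := fun i => (x / a) ^ i / (i.factorial : ℝ))
      (fun i _ => by positivity) (Finset.self_mem_range_succ k)
  have h2 : (x / a) ^ k ≤ Real.exp (x / a) * (k.factorial : ℝ) := (div_le_iff₀ hfac).1 h1
  have hxk : x ^ k = (x / a) ^ k * a ^ k := by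
    rw [div_pow]
    field_simp
  have h5 : x ^ k ≤ Real.exp (x / a) * (k.factorial : ℝ) * a ^ k := by
    rw [hxk]
    exact mul_le_mul_of_nonneg_right h2 (by positivity)
  calc x ^ k * Real.exp (-x / a)
      ≤ (Real.exp (x / a) * (k.factorial : ℝ) * a ^ k) * Real.exp (-x / a) :=
        mul_le_mul_of_nonneg_right h5 (Real.exp_pos _).le
    _ = (k.factorial : ℝ) * a ^ k * (Real.exp (x / a) * Real.exp (-x / a)) := by ring
    _ = (k.factorial : ℝ) * a ^ k := by
        rw [← Real.exp_add, show x / a + -x / a = 0 by ring, Real.exp_zero, mul_one]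

/-- `∫₀^∞ x^k e^{-x/a} dx = k! a^(k+1)`. -/
private lemma moment_integral (k : ℕ) {a : ℝ} (ha : 0 < a) :
    ∫ x in Set.Ioi (0:ℝ), x ^ k * Real.exp (-x / a) = (k.factorial : ℝ) * a ^ (k + 1) := by
  have h := Real.integral_rpow_mul_exp_neg_mul_Ioi (a := (k : ℝ) + 1) (r := 1 / a)
    (by positivity) (by positivity)
  rw [show ((k:ℝ) + 1 - 1) = (k:ℝ) by ring, one_div_one_div] at h
  rw [Real.Gamma_nat_eq_factorial] at h
  rw [show a ^ ((k:ℝ) + 1) = a ^ (k + 1 : ℕ) by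
    rw [show ((k:ℝ) + 1) = ((k + 1 : ℕ) : ℝ) by push_cast; ring, Real.rpow_natCast]] at h
  calc ∫ x in Set.Ioi (0:ℝ), x ^ k * Real.exp (-x / a)
      = ∫ t in Set.Ioi (0:ℝ), t ^ ((k:ℕ) : ℝ) * Real.exp (-(1 / a * t)) := by
        apply MeasureTheory.setIntegral_congr_fun measurableSet_Ioi
        intro t _
        simp only [Real.rpow_natCast]
        rw [show -(1 / a * t) = -t / a by ring]
    _ = a ^ (k + 1) * ((k.factorial : ℕ) : ℝ) := h
    _ = (k.factorial : ℝ) * a ^ (k + 1) := by push_cast; ring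

private lemma moment_integrable (k : ℕ) {a : ℝ} (ha : 0 < a) :
    MeasureTheory.IntegrableOn (fun x : ℝ => x ^ k * Real.exp (-x / a)) (Set.Ioi 0) := by
  have hs : (-1:ℝ) < (k:ℝ) := by
    have : (0:ℝ) ≤ (k:ℝ) := Nat.cast_nonneg k
    linarith
  have h := integrableOn_rpow_mul_exp_neg_mul_rpow (s := (k:ℝ)) (p := 1) (b := 1 / a)
    hs zero_lt_one (by positivity)
  apply h.congr_fun ?_ measurableSet_Ioi
  intro x _
  simp only [Real.rpow_one, Real.rpow_natCast]
  rw [show -(1 / a) * x = -x / a by ring]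

/-- Abstract summation-comparison lemma: if `f` is eventually dominated interval-wise by its
integral, except at one index `m` where it is bounded by `C`, then all partial sums of
`f` over `ℕ` are at most `C + I`. -/
private lemma sum_le_const_add_integral (f : ℝ → ℝ) (hfc : Continuous f)
    (hf0 : ∀ x : ℝ, 0 ≤ x → 0 ≤ f x) (C I : ℝ)
    (hI : ∀ P : ℕ, ∫ x in (0:ℝ)..(P:ℝ), f x ≤ I)
    (m : ℕ) (hm : f m ≤ C)
    (hlt : ∀ n : ℕ, n < m → ∀ x ∈ Set.Icc (n:ℝ) ((n:ℝ)+1), f n ≤ f x)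
    (hgt : ∀ n : ℕ, m < n → ∀ x ∈ Set.Icc ((n:ℝ)-1) (n:ℝ), f n ≤ f x) :
    ∀ M : ℕ, ∑ n ∈ Finset.range M, f n ≤ C + I := by
  set g : ℕ → ℝ := fun j => ∫ x in (j:ℝ)..((j:ℝ)+1), f x with hg
  have hgint : ∀ u v : ℝ, IntervalIntegrable f MeasureTheory.volume u v :=
    fun u v => hfc.intervalIntegrable u v
  have hgsum : ∀ P : ℕ, ∑ j ∈ Finset.range P, g j = ∫ x in (0:ℝ)..(P:ℝ), f x := by
    intro P
    calc ∑ j ∈ Finset.range P, g j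
        = ∑ i ∈ Finset.range P, ∫ x in ((i:ℕ):ℝ)..(((i+1:ℕ)):ℝ), f x := by
          refine Finset.sum_congr rfl fun i _ => ?_
          simp only [hg]
          congr 1
          push_cast
          ring
      _ = ∫ x in ((0:ℕ):ℝ)..((P:ℕ):ℝ), f x :=
          intervalIntegral.sum_integral_adjacent_intervals (fun i _ => hgint _ _)
      _ = ∫ x in (0:ℝ)..(P:ℝ), f x := by norm_num
  have hfg_lt : ∀ n : ℕ, n < m → f n ≤ g n := by
    intro n hn
    have h := intervalIntegral.integral_mono_on
      (by linarith [Nat.cast_nonneg (α := ℝ) n] : (n:ℝ) ≤ (n:ℝ)+1)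
      (intervalIntegrable_const) (hgint _ _) (hlt n hn)
    simpa using h
  have hfg_gt : ∀ n : ℕ, m < n → f n ≤ g (n - 1) := by
    intro n hn
    have h1 : ((n - 1 : ℕ) : ℝ) = (n : ℝ) - 1 := by
      have hn1 : 1 ≤ n := by omega
      push_cast [hn1]
      ring
    have h := intervalIntegral.integral_mono_on
      (by linarith [Nat.cast_nonneg (α := ℝ) n] : (n:ℝ)-1 ≤ (n:ℝ))
      (intervalIntegrable_const) (hgint _ _) (hgt n hn)
    have h2 : g (n - 1) = ∫ x in ((n:ℝ)-1)..(n:ℝ), f x := by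
      simp only [hg, h1]
      rw [show (n:ℝ) - 1 + 1 = (n:ℝ) by ring]
    rw [h2]
    simpa using h
  suffices key : ∀ M : ℕ, m + 1 ≤ M → ∑ n ∈ Finset.range M, f n ≤ C + I by
    intro M
    refine le_trans ?_ (key (max M (m+1)) (le_max_right _ _))
    apply Finset.sum_le_sum_of_subset_of_nonneg (Finset.range_subset_range.2 (le_max_left _ _))
    intro i _ _
    exact hf0 _ (Nat.cast_nonneg i)
  intro M hM
  have hmM : m < M := by omega
  rw [Finset.range_eq_Ico, ← Finset.sum_Ico_consecutive _ (Nat.zero_le m) (le_of_lt hmM),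
    Finset.sum_eq_sum_Ico_succ_bot hmM]
  have b1 : ∑ n ∈ Finset.Ico 0 m, f n ≤ ∑ n ∈ Finset.Ico 0 m, g n :=
    Finset.sum_le_sum fun n hn => hfg_lt n (Finset.mem_Ico.1 hn).2
  have b2 : ∑ n ∈ Finset.Ico (m+1) M, f n ≤ ∑ n ∈ Finset.Ico (m+1) M, g (n-1) :=
    Finset.sum_le_sum fun n hn =>
      hfg_gt n (by have := (Finset.mem_Ico.1 hn).1; omega)
  have b3 : ∑ n ∈ Finset.Ico (m+1) M, g (n-1) = ∑ j ∈ Finset.Ico m (M-1), g j := by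
    rw [Finset.sum_Ico_eq_sum_range, Finset.sum_Ico_eq_sum_range]
    refine Finset.sum_congr (by congr 1; omega) fun i _ => by congr 1; omega
  have b4 : ∑ n ∈ Finset.Ico 0 m, g n + ∑ j ∈ Finset.Ico m (M-1), g j
      = ∑ j ∈ Finset.range (M-1), g j := by
    rw [Finset.range_eq_Ico]
    exact Finset.sum_Ico_consecutive _ (Nat.zero_le m) (by omega)
  have b5 : ∑ j ∈ Finset.range (M-1), g j ≤ I := by
    rw [hgsum]
    exact hI (M-1)
  linarith

/-- If `u_n ≥ 0` and `u_n ≤ e^{-n/a}` for some `a > 0`, then for every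
`k ∈ ℕ`, `Σ_n n^k u_n ≤ (1+a) a^k k!` (in particular the sum converges). -/
theorem exponential_decay_implies_moment_bounds
    (u : ℕ → ℝ) (hu : ∀ n, 0 ≤ u n) (a : ℝ) (ha : 0 < a)
    (hdecay : ∀ n : ℕ, u n ≤ Real.exp (-(n : ℝ) / a)) :
    ∀ k : ℕ, Summable (fun n : ℕ => (n : ℝ) ^ k * u n) ∧
      ∑' n : ℕ, (n : ℝ) ^ k * u n ≤ (1 + a) * a ^ k * (Nat.factorial k : ℝ) := by
  intro k
  set f : ℝ → ℝ := fun x => x ^ k * Real.exp (-x / a) with hf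
  have hfc : Continuous f := by
    apply Continuous.mul (continuous_pow k)
    exact Real.continuous_exp.comp ((continuous_id.neg).div_const a)
  have hf0 : ∀ x : ℝ, 0 ≤ x → 0 ≤ f x :=
    fun x hx => mul_nonneg (pow_nonneg hx k) (Real.exp_pos _).le
  set N := ⌊(k : ℝ) * a⌋₊ with hN
  have hN1 : (N : ℝ) ≤ (k:ℝ) * a := Nat.floor_le (by positivity)
  have hN2 : (k:ℝ) * a < (N:ℝ) + 1 := Nat.lt_floor_add_one ((k:ℝ) * a)
  have hcastN : ((N + 1 : ℕ) : ℝ) = (N : ℝ) + 1 := by push_cast; ring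
  obtain ⟨m, hlt, hgt⟩ :
      ∃ m : ℕ, (∀ n : ℕ, n < m → ∀ x ∈ Set.Icc (n:ℝ) ((n:ℝ)+1), f n ≤ f x) ∧
        (∀ n : ℕ, m < n → ∀ x ∈ Set.Icc ((n:ℝ)-1) (n:ℝ), f n ≤ f x) := by
    by_cases hc : f N ≤ f (N+1)
    · refine ⟨N+1, ?_, ?_⟩
      · intro n hn x hx
        have hnN : n ≤ N := by omega
        have hnNR : (n : ℝ) ≤ (N : ℝ) := by exact_mod_cast hnN
        rcases le_or_gt x ((k:ℝ)*a) with hxa | hxa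
        · exact moment_mono_up k ha (Nat.cast_nonneg n) hx.1 hxa
        · have h1 : f n ≤ f N := moment_mono_up k ha (Nat.cast_nonneg n) hnNR hN1
          have hxN1 : x ≤ (N:ℝ) + 1 := le_trans hx.2 (by linarith)
          have h3 : f ((N:ℝ)+1) ≤ f x := moment_mono_down k ha hxa.le hxN1
          calc f n ≤ f N := h1
            _ ≤ f ((N:ℝ)+1) := hc
            _ ≤ f x := h3
      · intro n hn x hx
        apply moment_mono_down k ha ?_ hx.2
        have hn2 : ((N:ℝ)) + 2 ≤ (n:ℝ) := by exact_mod_cast (by omega : N + 2 ≤ n)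
        calc (k:ℝ)*a ≤ (N:ℝ)+1 := hN2.le
          _ ≤ (n:ℝ)-1 := by linarith
          _ ≤ x := hx.1
    · refine ⟨N, ?_, ?_⟩
      · intro n hn x hx
        apply moment_mono_up k ha (Nat.cast_nonneg n) hx.1
        have hn1 : (n:ℝ) + 1 ≤ (N:ℝ) := by exact_mod_cast (by omega : n + 1 ≤ N)
        calc x ≤ (n:ℝ)+1 := hx.2
          _ ≤ (N:ℝ) := hn1
          _ ≤ (k:ℝ)*a := hN1
      · intro n hn x hx
        rcases le_or_gt ((k:ℝ)*a) x with hxa | hxa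
        · exact moment_mono_down k ha hxa hx.2
        · have hn1 : (N:ℝ) + 1 ≤ (n:ℝ) := by exact_mod_cast (by omega : N + 1 ≤ n)
          have h1 : f n ≤ f ((N:ℝ)+1) := moment_mono_down k ha hN2.le hn1
          have h2 : f ((N:ℝ)+1) ≤ f N := (not_le.1 hc).le
          have h3 : f N ≤ f x :=
            moment_mono_up k ha (Nat.cast_nonneg N) (by linarith [hx.1]) hxa.le
          calc f n ≤ f ((N:ℝ)+1) := h1
            _ ≤ f N := h2
            _ ≤ f x := h3
  have hm : f m ≤ (k.factorial : ℝ) * a ^ k := moment_le_max k ha (Nat.cast_nonneg m)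
  have hI : ∀ P : ℕ, ∫ x in (0:ℝ)..(P:ℝ), f x ≤ (k.factorial : ℝ) * a ^ (k+1) := by
    intro P
    rw [intervalIntegral.integral_of_le (Nat.cast_nonneg P), ← moment_integral k ha]
    apply MeasureTheory.setIntegral_mono_set (moment_integrable k ha)
    · refine (MeasureTheory.ae_restrict_iff' measurableSet_Ioi).2 (MeasureTheory.ae_of_all _ ?_)
      intro x hx
      exact hf0 x (le_of_lt hx)
    · exact (Set.Ioc_subset_Ioi_self).eventuallyLE
  have hbound := sum_le_const_add_integral f hfc hf0 _ _ hI m hm hlt hgt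
  have hnn : ∀ n : ℕ, 0 ≤ (n:ℝ) ^ k * u n :=
    fun n => mul_nonneg (pow_nonneg (Nat.cast_nonneg n) k) (hu n)
  have hpar : ∀ M : ℕ, ∑ n ∈ Finset.range M, ((n:ℝ) ^ k * u n)
      ≤ (1 + a) * a ^ k * (k.factorial : ℝ) := by
    intro M
    calc ∑ n ∈ Finset.range M, ((n:ℝ) ^ k * u n) ≤ ∑ n ∈ Finset.range M, f n :=
        Finset.sum_le_sum fun n _ =>
          mul_le_mul_of_nonneg_left (hdecay n) (pow_nonneg (Nat.cast_nonneg n) k)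
      _ ≤ (k.factorial : ℝ) * a ^ k + (k.factorial : ℝ) * a ^ (k+1) := hbound M
      _ = (1 + a) * a ^ k * (k.factorial : ℝ) := by ring
  exact ⟨summable_of_sum_range_le hnn hpar, Real.tsum_le_of_sum_range_le hnn hpar⟩


end

end BoseHubbard
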